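/- Let K be a difference field of characteristic exponent p. Then there exists an extension of difference fields K ⊆ K̃ such that K̃ is a purely inseparable algebraic field extension of K, K̃ is closed under twists, and for every extension L of K in the category of difference fields which is closed under twists there is a unique difference-field embedding of K̃ into L over K (i.e., a ring homomorphism commuting with σ and fixing K pointwise). -/

import Mathlib

/-! STATEMENT 3: every difference field `K` of characteristic exponent `p` admits a
twist closure `K̃`: a purely inseparable algebraic extension closed under twists which
embeds uniquely over `K` into any difference field extension closed under twists. -/

universe u v

/-- A difference field: a field equipped with a (necessarily injective) ring
endomorphism `sg`. -/
structure DiffField : Type (u + 1) where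
  carrier : Type u
  [fld : Field carrier]
  sg : carrier →+* carrier

attribute [instance] DiffField.fld

/-- A difference field of characteristic exponent `p` is closed under twists if for every
`x` and every `n` the element `σ x` has a `p^n`-th root. -/
def ClosedUnderTwists (p : ℕ) {F : Type*} [Field F] (σ : F →+* F) : Prop :=
  ∀ (x : F) (n : ℕ), ∃ y : F, y ^ p ^ n = σ x

/-! ### Auxiliary lemmas -/

section Aux

/-- raising to the `q^n`-th power is injective on a field of exponential characteristic `q`. -/
lemma TwistAux.pow_expChar_pow_inj {F : Type*} [Field F] (q : ℕ) [ExpChar F q] (n : ℕ)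
    {a b : F} (h : a ^ q ^ n = b ^ q ^ n) : a = b := by
  have h2 : (a - b) ^ q ^ n = 0 := by rw [sub_pow_expChar_pow, h, sub_self]
  have := pow_eq_zero_iff (expChar_pow_pos F q n).ne' |>.1 h2
  exact sub_eq_zero.1 this

lemma TwistAux.pow_glue {M : Type*} [CommMonoid M] (a b : M) (p n m : ℕ) :
    (a * b) ^ p ^ (n + m) = (a ^ p ^ n) ^ p ^ m * (b ^ p ^ m) ^ p ^ n := by
  rw [← pow_mul, ← pow_mul, ← pow_add, ← pow_add, Nat.add_comm m n, mul_pow]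

lemma TwistAux.pow_glue_add {R : Type*} [CommSemiring R] (q : ℕ) [ExpChar R q] (a b : R)
    (n m : ℕ) :
    (a + b) ^ q ^ (n + m) = (a ^ q ^ n) ^ q ^ m + (b ^ q ^ m) ^ q ^ n := by
  rw [add_pow_expChar_pow, ← pow_mul, ← pow_mul, ← pow_add, ← pow_add, Nat.add_comm m n]

end Aux

section Twist

open PerfectClosure

variable (p : ℕ) [Fact p.Prime] (K : Type u) [Field K] [CharP K p] (σ : K →+* K)

/-- The lift of `σ` to the perfect closure. -/
noncomputable def TwistAux.sigmaT : PerfectClosure K p →+* PerfectClosure K p :=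
  PerfectClosure.lift K p (PerfectClosure K p) ((PerfectClosure.of K p).comp σ)

lemma TwistAux.sigmaT_of (x : K) :
    TwistAux.sigmaT p K σ (PerfectClosure.of K p x) = PerfectClosure.of K p (σ x) := by
  have h := (PerfectClosure.lift K p (PerfectClosure K p)).symm_apply_apply
    ((PerfectClosure.of K p).comp σ)
  exact RingHom.congr_fun h x

lemma TwistAux.exists_pow_eq_of (x : PerfectClosure K p) :
    ∃ n k, x ^ p ^ n = PerfectClosure.of K p k := by
  obtain ⟨⟨n, k⟩, rfl⟩ := PerfectClosure.mk_surjective K p x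
  refine ⟨n, k, ?_⟩
  rw [← iterateFrobenius_def, coe_iterateFrobenius]
  exact PerfectClosure.iterate_frobenius_mk K p n k

/-- The twist closure of `K`, as a subfield of the perfect closure. -/
noncomputable def TwistAux.twistF : Subfield (PerfectClosure K p) :=
  Subfield.closure (Set.range (PerfectClosure.of K p) ∪ Set.range (TwistAux.sigmaT p K σ))

namespace TwistAux

lemma of_mem (x : K) : PerfectClosure.of K p x ∈ twistF p K σ :=
  Subfield.subset_closure (Or.inl ⟨x, rfl⟩)

lemma sigmaT_mem (a : PerfectClosure K p) : sigmaT p K σ a ∈ twistF p K σ :=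
  Subfield.subset_closure (Or.inr ⟨a, rfl⟩)

lemma sigmaT_maps {x : PerfectClosure K p} (hx : x ∈ twistF p K σ) :
    sigmaT p K σ x ∈ twistF p K σ := by
  have hle : twistF p K σ ≤ (twistF p K σ).comap (sigmaT p K σ) := by
    refine Subfield.closure_le.2 ?_
    rintro y (⟨z, rfl⟩ | ⟨a, rfl⟩)
    · rw [SetLike.mem_coe, Subfield.mem_comap, sigmaT_of]
      exact of_mem p K σ (σ z)
    · rw [SetLike.mem_coe, Subfield.mem_comap]
      exact sigmaT_mem p K σ _
  exact Subfield.mem_comap.1 (hle hx)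

/-- The restriction of the lifted endomorphism to the twist closure. -/
noncomputable def sigmaRes : (twistF p K σ) →+* (twistF p K σ) where
  toFun x := ⟨sigmaT p K σ x, sigmaT_maps p K σ x.2⟩
  map_one' := Subtype.ext <| by simp
  map_mul' x y := Subtype.ext <| by push_cast; simp
  map_zero' := Subtype.ext <| by simp
  map_add' x y := Subtype.ext <| by push_cast; simp

@[simp] lemma sigmaRes_coe (x : twistF p K σ) :
    (sigmaRes p K σ x : PerfectClosure K p) = sigmaT p K σ x := rfl

/-- The embedding of `K` into the twist closure. -/
noncomputable def iotaT : K →+* twistF p K σ where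
  toFun x := ⟨PerfectClosure.of K p x, of_mem p K σ x⟩
  map_one' := Subtype.ext <| map_one _
  map_mul' x y := Subtype.ext <| map_mul _ _ _
  map_zero' := Subtype.ext <| map_zero _
  map_add' x y := Subtype.ext <| map_add _ _ _

@[simp] lemma iotaT_coe (x : K) : (iotaT p K σ x : PerfectClosure K p) =
    PerfectClosure.of K p x := rfl

lemma iotaT_comm (x : K) : iotaT p K σ (σ x) = sigmaRes p K σ (iotaT p K σ x) :=
  Subtype.ext <| by simp [sigmaT_of]

lemma purely_insep (x : twistF p K σ) : ∃ n : ℕ, x ^ p ^ n ∈ Set.range (iotaT p K σ) := by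
  obtain ⟨n, k, hk⟩ := exists_pow_eq_of p K (x : PerfectClosure K p)
  exact ⟨n, k, Subtype.ext <| by push_cast; rw [hk]; rfl⟩

lemma closed : ClosedUnderTwists p (sigmaRes p K σ) := by
  intro x n
  have hsurj : Function.Surjective fun a : PerfectClosure K p => a ^ p ^ n := by
    intro b
    obtain ⟨a, ha⟩ := (PerfectClosure.instPerfectRing K p).bijective_frobenius.surjective.iterate n b
    exact ⟨a, by rw [← ha]; show a ^ p ^ n = (frobenius (PerfectClosure K p) p)^[n] a; rw [← coe_iterateFrobenius, iterateFrobenius_def]⟩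
  obtain ⟨a, ha⟩ := hsurj (x : PerfectClosure K p)
  have ha' : a ^ p ^ n = (x : PerfectClosure K p) := ha
  refine ⟨⟨sigmaT p K σ a, sigmaT_mem p K σ a⟩, Subtype.ext ?_⟩
  push_cast
  rw [← map_pow, ha']
  rfl

section Universal

universe w

variable {L : Type w} [Field L] (τ : L →+* L) (j : K →+* L)

/-- The main existence/uniqueness statement for the universal property. -/
theorem universal (hj : ∀ x, j (σ x) = τ (j x)) (hcl : ClosedUnderTwists p τ) :
    ∃! e : twistF p K σ →+* L,
      (∀ x, e (sigmaRes p K σ x) = τ (e x)) ∧ e.comp (iotaT p K σ) = j := by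
  haveI : CharP L p := charP_of_injective_ringHom j.injective p
  haveI : ExpChar L p := ExpChar.prime Fact.out
  haveI : ExpChar (PerfectClosure K p) p := ExpChar.prime Fact.out
  set S : Set (PerfectClosure K p) :=
    {x | ∃ y : L, ∃ n k, x ^ p ^ n = PerfectClosure.of K p k ∧ y ^ p ^ n = j k} with hS
  have hmul : ∀ {a b}, a ∈ S → b ∈ S → a * b ∈ S := by
    rintro a b ⟨y, n, k, h1, h2⟩ ⟨z, m, l, g1, g2⟩
    refine ⟨y * z, n + m, k ^ p ^ m * l ^ p ^ n, ?_, ?_⟩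
    · rw [pow_glue, h1, g1, map_mul, map_pow, map_pow]
    · rw [pow_glue, h2, g2, map_mul, map_pow, map_pow]
  have hadd : ∀ {a b}, a ∈ S → b ∈ S → a + b ∈ S := by
    rintro a b ⟨y, n, k, h1, h2⟩ ⟨z, m, l, g1, g2⟩
    refine ⟨y + z, n + m, k ^ p ^ m + l ^ p ^ n, ?_, ?_⟩
    · rw [pow_glue_add p, h1, g1, map_add, map_pow, map_pow]
    · rw [pow_glue_add p, h2, g2, map_add, map_pow, map_pow]
  have hneg1 : (-1 : PerfectClosure K p) ∈ S :=
    ⟨j (-1), 0, -1, by simp, by simp⟩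
  let SL : Subfield (PerfectClosure K p) :=
    { carrier := S
      one_mem' := ⟨1, 0, 1, by simp, by simp⟩
      mul_mem' := fun ha hb => hmul ha hb
      zero_mem' := ⟨0, 0, 0, by simp, by simp⟩
      add_mem' := fun ha hb => hadd ha hb
      neg_mem' := fun {a} ha => by
        have := hmul hneg1 ha
        rwa [neg_one_mul] at this
      inv_mem' := by
        rintro a ⟨y, n, k, h1, h2⟩
        exact ⟨y⁻¹, n, k⁻¹, by rw [inv_pow, h1, map_inv₀], by rw [inv_pow, h2, map_inv₀]⟩ }
  have ht : twistF p K σ ≤ SL := by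
    refine Subfield.closure_le.2 ?_
    rintro x (⟨z, rfl⟩ | ⟨a, rfl⟩)
    · exact ⟨j z, 0, z, by simp, by simp⟩
    · obtain ⟨n, k, hk⟩ := exists_pow_eq_of p K a
      obtain ⟨y, hy⟩ := hcl (j k) n
      refine ⟨y, n, σ k, ?_, ?_⟩
      · rw [← map_pow, hk, sigmaT_of]
      · rw [hy, hj]
  -- the candidate map
  have hP : ∀ x : twistF p K σ,
      ∃ y : L, ∃ n k, (x : PerfectClosure K p) ^ p ^ n = PerfectClosure.of K p k ∧
        y ^ p ^ n = j k := fun x => ht x.2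
  set e0 : twistF p K σ → L := fun x => (hP x).choose with he0
  have espec : ∀ (x : twistF p K σ) (n : ℕ) (k : K),
      (x : PerfectClosure K p) ^ p ^ n = PerfectClosure.of K p k → (e0 x) ^ p ^ n = j k := by
    intro x n k h
    obtain ⟨n0, k0, H1, H2⟩ := (hP x).choose_spec
    -- compare at level n + n0
    have hof : PerfectClosure.of K p (k ^ p ^ n0) = PerfectClosure.of K p (k0 ^ p ^ n) := by
      rw [map_pow, map_pow, ← h, ← H1, ← pow_mul, ← pow_mul, Nat.mul_comm]
    have hk : k ^ p ^ n0 = k0 ^ p ^ n :=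
      (PerfectClosure.of K p).injective hof
    have : ((e0 x) ^ p ^ n) ^ p ^ n0 = (j k) ^ p ^ n0 := by
      rw [← pow_mul, Nat.mul_comm, pow_mul, H2, ← map_pow, ← map_pow, hk]
    exact pow_expChar_pow_inj p n0 this
  have e_eq : ∀ (x : twistF p K σ) (n : ℕ) (k : K) (z : L),
      (x : PerfectClosure K p) ^ p ^ n = PerfectClosure.of K p k → z ^ p ^ n = j k →
      e0 x = z := by
    intro x n k z h1 h2
    exact pow_expChar_pow_inj p n ((espec x n k h1).trans h2.symm)
  have hxnk : ∀ x : twistF p K σ, ∃ n k,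
      (x : PerfectClosure K p) ^ p ^ n = PerfectClosure.of K p k :=
    fun x => exists_pow_eq_of p K x
  let E : twistF p K σ →+* L :=
    { toFun := e0
      map_one' := e_eq 1 0 1 1 (by simp) (by simp)
      map_mul' := by
        intro x y
        obtain ⟨n, k, h1⟩ := hxnk x
        obtain ⟨m, l, g1⟩ := hxnk y
        refine e_eq (x * y) (n + m) (k ^ p ^ m * l ^ p ^ n) (e0 x * e0 y) ?_ ?_
        · push_cast
          rw [pow_glue, h1, g1, map_mul, map_pow, map_pow]
        · rw [pow_glue, espec x n k h1, espec y m l g1, map_mul, map_pow, map_pow]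
      map_zero' := e_eq 0 0 0 0 (by simp) (by simp)
      map_add' := by
        intro x y
        obtain ⟨n, k, h1⟩ := hxnk x
        obtain ⟨m, l, g1⟩ := hxnk y
        refine e_eq (x + y) (n + m) (k ^ p ^ m + l ^ p ^ n) (e0 x + e0 y) ?_ ?_
        · push_cast
          rw [pow_glue_add p, h1, g1, map_add, map_pow, map_pow]
        · rw [pow_glue_add p, espec x n k h1, espec y m l g1, map_add, map_pow, map_pow] }
  have hE0 : ∀ x, E x = e0 x := fun _ => rfl
  refine ⟨E, ⟨?_, ?_⟩, ?_⟩
  · -- commutes with σ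
    intro x
    obtain ⟨n, k, h1⟩ := hxnk x
    rw [hE0, hE0]
    refine e_eq (sigmaRes p K σ x) n (σ k) (τ (e0 x)) ?_ ?_
    · rw [sigmaRes_coe, ← map_pow, h1, sigmaT_of]
    · rw [← map_pow, espec x n k h1, hj]
  · -- restricts to j
    ext z
    simp only [RingHom.comp_apply, hE0]
    exact e_eq (iotaT p K σ z) 0 z (j z) (by simp) (by simp)
  · -- uniqueness
    rintro e' ⟨-, hcomp⟩
    ext x
    obtain ⟨n, k, h1⟩ := hxnk x
    have hx : x ^ p ^ n = iotaT p K σ k := Subtype.ext <| by push_cast; rw [h1]; rfl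
    have h2 : (e' x) ^ p ^ n = j k := by
      rw [← map_pow, hx, ← RingHom.comp_apply, hcomp]
    rw [hE0]
    exact (e_eq x n k (e' x) h1 h2).symm

end Universal

end TwistAux

end Twist

theorem statement3 (p : ℕ) (K : DiffField.{u}) [ExpChar K.carrier p] :
    ∃ (Kt : DiffField.{u}) (ι : K.carrier →+* Kt.carrier),
      -- ι is an embedding of difference fields
      (∀ x, ι (K.sg x) = Kt.sg (ι x)) ∧
      -- K̃ is a purely inseparable algebraic extension of K
      (∀ x : Kt.carrier, ∃ n : ℕ, x ^ p ^ n ∈ Set.range ι) ∧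
      -- K̃ is closed under twists
      ClosedUnderTwists p Kt.sg ∧
      -- universal property: unique difference-field embedding over K into any
      -- difference field extension of K closed under twists
      (∀ (L : DiffField.{v}) (j : K.carrier →+* L.carrier),
        (∀ x, j (K.sg x) = L.sg (j x)) → ClosedUnderTwists p L.sg →
        ∃! e : Kt.carrier →+* L.carrier,
          (∀ x, e (Kt.sg x) = L.sg (e x)) ∧ e.comp ι = j) := by
  obtain hp := ‹ExpChar K.carrier p›
  cases hp with
  | zero =>
    -- p = 1 : K itself is its own twist closure
    refine ⟨K, RingHom.id _, fun x => rfl, ?_, ?_, ?_⟩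
    · intro x
      exact ⟨0, x, by simp⟩
    · intro x n
      exact ⟨K.sg x, by simp⟩
    · intro L j hj hcl
      refine ⟨j, ⟨hj, RingHom.comp_id j⟩, ?_⟩
      rintro e' ⟨-, hcomp⟩
      rw [← hcomp]
      exact RingHom.comp_id e'
  | prime hq =>
    haveI : Fact p.Prime := ⟨hq⟩
    refine ⟨⟨TwistAux.twistF p K.carrier K.sg, TwistAux.sigmaRes p K.carrier K.sg⟩,
      TwistAux.iotaT p K.carrier K.sg, TwistAux.iotaT_comm p K.carrier K.sg,
      TwistAux.purely_insep p K.carrier K.sg, TwistAux.closed p K.carrier K.sg, ?_⟩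
    intro L j hj hcl
    exact TwistAux.universal p K.carrier K.sg L.sg j hj hcl
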